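/- Fix λ ∈ ℂ. Assume the kernel K satisfies the matrix partial differential equation K_xx(x,y) − K_yy(x,y) = Ṽ(x)·K(x,y) − K(x,y)·V(y) on 0 ≤ y ≤ x, where Ṽ(x) := V(x) + 2·(d/dx)K(x,x), together with the boundary relation −K_y(x,0)·A + K(x,0)·B = 0 for all x ≥ 0. Define φ̃(x) := φ(x) + ∫₀ˣ K(x,y)·φ(y) dy. Then φ̃ is twice continuously differentiable and satisfies the perturbed Schrödinger equation φ̃''(x) = (Ṽ(x) − λ)·φ̃(x) for all x ≥ 0, with φ̃(0) = A and φ̃'(0) = B + K(0,0)·A. (Theorem 5.2(a) and (c), with λ = k².) -/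

import Mathlib

open Matrix MeasureTheory Set

attribute [local instance] Matrix.normedAddCommGroup Matrix.normedSpace

open intervalIntegral

namespace GLaux

variable {n : ℕ}

local notation "M" => Matrix (Fin n) (Fin n) ℂ

noncomputable abbrev topM : TopologicalSpace M :=
  @UniformSpace.toTopologicalSpace M (@PseudoMetricSpace.toUniformSpace M
    (@SeminormedAddCommGroup.toPseudoMetricSpace M
      (@NormedAddCommGroup.toSeminormedAddCommGroup M Matrix.normedAddCommGroup)))

attribute [local instance] topM

/-- clamp a point into the region `{0 ≤ y ≤ x}` -/
def cl (p : ℝ × ℝ) : ℝ × ℝ := (max p.1 (max p.2 0), max p.2 0)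

lemma continuous_cl : Continuous cl :=
  ((continuous_fst.max (continuous_snd.max continuous_const)).prodMk
    (continuous_snd.max continuous_const))

lemma cl_mem (p : ℝ × ℝ) : cl p ∈ {q : ℝ × ℝ | 0 ≤ q.2 ∧ q.2 ≤ q.1} :=
  ⟨le_max_right _ _, le_max_right _ _⟩

lemma cl_eq {x y : ℝ} (h0 : 0 ≤ y) (hyx : y ≤ x) : cl (x, y) = (x, y) := by
  simp [cl, max_eq_left, h0, hyx, max_eq_left (le_trans h0 hyx)]

/-- continuous extension of a region-continuous function -/
noncomputable def ext (F : ℝ → ℝ → M) : ℝ → ℝ → M := fun x y => F (cl (x, y)).1 (cl (x, y)).2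

lemma ext_eq (F : ℝ → ℝ → M) {x y : ℝ} (h0 : 0 ≤ y) (hyx : y ≤ x) : ext F x y = F x y := by
  unfold ext; rw [cl_eq h0 hyx]

lemma continuous_ext {F : ℝ → ℝ → M}
    (hF : ContinuousOn (fun p : ℝ × ℝ => F p.1 p.2) {p : ℝ × ℝ | 0 ≤ p.2 ∧ p.2 ≤ p.1}) :
    Continuous (fun p : ℝ × ℝ => ext F p.1 p.2) :=
  hF.comp_continuous continuous_cl cl_mem

/-- one-variable extension -/
noncomputable def ext1 (f : ℝ → M) : ℝ → M := fun x => f (max x 0)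

lemma ext1_eq (f : ℝ → M) {x : ℝ} (hx : 0 ≤ x) : ext1 f x = f x := by
  unfold ext1; rw [max_eq_left hx]

lemma continuous_ext1 {f : ℝ → M} (hf : ContinuousOn f (Ici 0)) : Continuous (ext1 f) :=
  hf.comp_continuous (continuous_id.max continuous_const) (fun x => mem_Ici.2 (le_max_right _ _))

/-- derivative of a product of matrix-valued functions -/
lemma hasDerivWithinAt_mul {c d : ℝ → M} {c' d' : M} {s : Set ℝ} {x : ℝ}
    (hc : HasDerivWithinAt c c' s x) (hd : HasDerivWithinAt d d' s x) :
    HasDerivWithinAt (fun y => c y * d y) (c' * d x + c x * d') s x := by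
  replace hc := hasDerivWithinAt_pi.1 hc
  replace hd := hasDerivWithinAt_pi.1 hd
  refine hasDerivWithinAt_pi.2 ?_
  intro i
  rw [hasDerivWithinAt_pi]
  intro j
  have : ∀ y, (c y * d y) i j = ∑ k, c y i k * d y k j := fun y => Matrix.mul_apply
  have h2 : (c' * d x + c x * d') i j = ∑ k, (c' i k * d x k j + c x i k * d' k j) := by
    simp [Matrix.mul_apply, Matrix.add_apply, Finset.sum_add_distrib]
  simp only [this, h2]
  exact HasDerivWithinAt.fun_sum fun k _ =>
    (hasDerivWithinAt_pi.1 (hc i) k).fun_mul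
      (hasDerivWithinAt_pi.1 (hd k) j)

noncomputable def mulL (C : M) : M →L[ℂ] M := (LinearMap.mulLeft ℂ C).toContinuousLinearMap
noncomputable def mulR (C : M) : M →L[ℂ] M := (LinearMap.mulRight ℂ C).toContinuousLinearMap

lemma integral_const_mul' (C : M) {f : ℝ → M} {a b : ℝ}
    (hf : IntervalIntegrable f volume a b) :
    ∫ y in a..b, C * f y = C * ∫ y in a..b, f y := by
  simpa [mulL] using ((mulL C).intervalIntegral_comp_comm hf)

lemma integral_mul_const' (C : M) {f : ℝ → M} {a b : ℝ}
    (hf : IntervalIntegrable f volume a b) :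
    ∫ y in a..b, f y * C = (∫ y in a..b, f y) * C := by
  simpa [mulR] using ((mulR C).intervalIntegral_comp_comm hf)

lemma fubini_identity {F Fx : ℝ → ℝ → M}
    (hF : Continuous fun p : ℝ × ℝ => F p.1 p.2)
    (hFx : Continuous fun p : ℝ × ℝ => Fx p.1 p.2)
    (hFTC : ∀ x y : ℝ, 0 ≤ y → y ≤ x → F x y - F y y = ∫ s in y..x, Fx s y)
    {f : ℝ → M} (hf : Continuous f) {t : ℝ} (ht : 0 ≤ t) :
    ∫ s in (0:ℝ)..t, (F s s * f s + ∫ y in (0:ℝ)..s, Fx s y * f y) =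
      ∫ y in (0:ℝ)..t, F t y * f y := by
  have hH : Continuous fun p : ℝ × ℝ => Fx p.1 p.2 * f p.2 :=
    hFx.matrix_mul (hf.comp continuous_snd)
  set H : ℝ × ℝ → M := fun p => Fx p.1 p.2 * f p.2 with hHdef
  have hT : MeasurableSet {p : ℝ × ℝ | p.2 ≤ p.1} :=
    measurableSet_le measurable_snd measurable_fst
  set G : ℝ × ℝ → M := ({p : ℝ × ℝ | p.2 ≤ p.1}).indicator H with hGdef
  -- continuity of the inner integral as a function of s
  have hinner : Continuous fun s => ∫ y in (0:ℝ)..s, Fx s y * f y := by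
    apply continuous_parametric_intervalIntegral_of_continuous (μ := volume)
      (f := fun s y => Fx s y * f y) ?_ continuous_id
    exact hH
  have hdiag : Continuous fun s => F s s * f s :=
    (hF.comp (continuous_id.prodMk continuous_id)).matrix_mul hf
  -- split the sum
  rw [intervalIntegral.integral_add (hdiag.intervalIntegrable _ _)
    (hinner.intervalIntegrable _ _)]
  -- integrability of G on the square
  have hGint : Integrable G
      ((volume.restrict (Ioc 0 t)).prod (volume.restrict (Ioc 0 t))) := by
    rw [Measure.prod_restrict]
    apply MeasureTheory.Integrable.indicator _ hT
    have : IntegrableOn H (Icc (0:ℝ) t ×ˢ Icc (0:ℝ) t) (volume.prod volume) :=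
      hH.continuousOn.integrableOn_compact (isCompact_Icc.prod isCompact_Icc)
    exact this.mono_set (Set.prod_mono Ioc_subset_Icc_self Ioc_subset_Icc_self)
  -- rewrite double integral as integral of G over the square
  have step1 : ∫ s in (0:ℝ)..t, (∫ y in (0:ℝ)..s, Fx s y * f y) =
      ∫ s in Ioc (0:ℝ) t, ∫ y in Ioc (0:ℝ) t, G (s, y) := by
    rw [intervalIntegral.integral_of_le ht]
    apply setIntegral_congr_fun measurableSet_Ioc
    intro s hs
    have hs0 : (0:ℝ) ≤ s := le_of_lt hs.1
    show (∫ y in (0:ℝ)..s, Fx s y * f y) = ∫ y in Ioc (0:ℝ) t, G (s, y)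
    rw [intervalIntegral.integral_of_le hs0]
    have : ∀ y ∈ Ioc (0:ℝ) t, (Ioc (0:ℝ) s).indicator (fun y => H (s, y)) y = G (s, y) := by
      intro y hy
      by_cases h : y ≤ s
      · simp [hGdef, Set.indicator_apply, Set.mem_Ioc, h, hy.1]
      · simp [hGdef, Set.indicator_apply, Set.mem_Ioc, h]
    rw [← setIntegral_congr_fun measurableSet_Ioc this, setIntegral_indicator measurableSet_Ioc,
      Set.inter_eq_right.2 (Ioc_subset_Ioc le_rfl hs.2)]
  -- swap
  have step2 : ∫ s in Ioc (0:ℝ) t, ∫ y in Ioc (0:ℝ) t, G (s, y) =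
      ∫ y in Ioc (0:ℝ) t, ∫ s in Ioc (0:ℝ) t, G (s, y) :=
    MeasureTheory.integral_integral_swap (by exact hGint)
  -- compute the inner s-integral
  have step3 : ∫ y in Ioc (0:ℝ) t, ∫ s in Ioc (0:ℝ) t, G (s, y) =
      ∫ y in Ioc (0:ℝ) t, (F t y - F y y) * f y := by
    apply setIntegral_congr_fun measurableSet_Ioc
    intro y hy
    have h1 : ∀ s, G (s, y) = (Ici y).indicator (fun s => H (s, y)) s := by
      intro s
      by_cases h : y ≤ s <;> simp [hGdef, Set.indicator_apply, h]
    simp only [h1]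
    rw [setIntegral_indicator measurableSet_Ici]
    have hset : Ioc (0:ℝ) t ∩ Ici y = Icc y t := by
      ext s
      constructor
      · rintro ⟨⟨_, h2⟩, h3⟩; exact ⟨h3, h2⟩
      · rintro ⟨h3, h2⟩; exact ⟨⟨lt_of_lt_of_le hy.1 h3, h2⟩, h3⟩
    rw [hset, integral_Icc_eq_integral_Ioc, ← intervalIntegral.integral_of_le hy.2]
    have : ∫ s in y..t, H (s, y) = (∫ s in y..t, Fx s y) * f y := by
      rw [hHdef]
      exact integral_mul_const' (f y)
        ((hFx.comp (continuous_id.prodMk continuous_const)).intervalIntegrable _ _)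
    rw [this, ← hFTC t y (le_of_lt hy.1) hy.2]
  rw [step1, step2, step3]
  -- reassemble
  have hFt : Continuous fun y => F t y * f y :=
    (hF.comp (continuous_const.prodMk continuous_id)).matrix_mul hf
  have hFd : Continuous fun y => F y y * f y := hdiag
  rw [← intervalIntegral.integral_of_le ht]
  have : ∀ y, (F t y - F y y) * f y = F t y * f y - F y y * f y := fun y => sub_mul _ _ _
  simp only [this]
  rw [intervalIntegral.integral_sub (hFt.intervalIntegrable _ _) (hFd.intervalIntegrable _ _)]
  abel



lemma key_cont {F Fx : ℝ → ℝ → M}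
    (hF : Continuous fun p : ℝ × ℝ => F p.1 p.2)
    (hFx : Continuous fun p : ℝ × ℝ => Fx p.1 p.2)
    {f : ℝ → M} (hf : Continuous f) :
    Continuous fun s => F s s * f s + ∫ y in (0:ℝ)..s, Fx s y * f y := by
  apply Continuous.add
  · exact (hF.comp (continuous_id.prodMk continuous_id)).matrix_mul hf
  · exact continuous_parametric_intervalIntegral_of_continuous (μ := volume)
      (f := fun s y => Fx s y * f y)
      (hFx.matrix_mul (hf.comp continuous_snd)) continuous_id

lemma key_deriv {F Fx : ℝ → ℝ → M}
    (hF : Continuous fun p : ℝ × ℝ => F p.1 p.2)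
    (hFx : Continuous fun p : ℝ × ℝ => Fx p.1 p.2)
    (hFTC : ∀ x y : ℝ, 0 ≤ y → y ≤ x → F x y - F y y = ∫ s in y..x, Fx s y)
    {f : ℝ → M} (hf : Continuous f) {x : ℝ} (hx : 0 ≤ x) :
    HasDerivWithinAt (fun t => ∫ y in (0:ℝ)..t, F t y * f y)
      (F x x * f x + ∫ y in (0:ℝ)..x, Fx x y * f y) (Ici 0) x := by
  have hh := key_cont hF hFx hf
  have hP : HasDerivAt
      (fun t => ∫ s in (0:ℝ)..t, (F s s * f s + ∫ y in (0:ℝ)..s, Fx s y * f y))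
      (F x x * f x + ∫ y in (0:ℝ)..x, Fx x y * f y) x :=
    intervalIntegral.integral_hasDerivAt_right (hh.intervalIntegrable _ _)
      (hh.stronglyMeasurable.stronglyMeasurableAtFilter) hh.continuousAt
  exact hP.hasDerivWithinAt.congr
    (fun t ht => (fubini_identity hF hFx hFTC hf ht).symm)
    (fubini_identity hF hFx hFTC hf hx).symm

set_option maxHeartbeats 1000000 in
lemma diag_deriv {F Fx Fy : ℝ → ℝ → M}
    (hFx : Continuous fun p : ℝ × ℝ => Fx p.1 p.2)
    (hFy : Continuous fun p : ℝ × ℝ => Fy p.1 p.2)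
    (hH : ∀ x y : ℝ, 0 ≤ y → y ≤ x → F x y - F y y = ∫ s in y..x, Fx s y)
    (hV : ∀ x y : ℝ, 0 ≤ y → y ≤ x → F x x - F x y = ∫ s in y..x, Fy x s)
    {x : ℝ} (hx : 0 ≤ x) :
    HasDerivWithinAt (fun t => F t t) (Fx x x + Fy x x) (Ici 0) x := by
  have cY : ∀ a : ℝ, Continuous fun s => Fy a s :=
    fun a => hFy.comp (continuous_const.prodMk continuous_id)
  have cX : ∀ b : ℝ, Continuous fun s => Fx s b :=
    fun b => hFx.comp (continuous_id.prodMk continuous_const)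
  have cS : ∀ a b : ℝ, Continuous fun s => Fy a s + Fx s b :=
    fun a b => (cY a).add (cX b)
  have key : ∀ t : ℝ, 0 ≤ t →
      F t t - F x x = ∫ s in x..t, (Fy (max t x) s + Fx s (min t x)) := by
    intro t ht
    rcases le_total x t with h | h
    · rw [max_eq_left h, min_eq_right h,
        intervalIntegral.integral_add ((cY t).intervalIntegrable _ _)
          ((cX x).intervalIntegrable _ _),
        ← hV t x hx h, ← hH t x hx h]
      abel
    · rw [max_eq_right h, min_eq_left h, intervalIntegral.integral_symm,
        intervalIntegral.integral_add ((cY x).intervalIntegrable _ _)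
          ((cX t).intervalIntegrable _ _),
        ← hV x t ht h, ← hH x t ht h]
      abel
  rw [hasDerivWithinAt_iff_tendsto_slope, Metric.tendsto_nhdsWithin_nhds]
  intro ε hε
  have hε4 : (0:ℝ) < ε / 4 := by linarith
  obtain ⟨δ₁, hδ₁, h1⟩ := Metric.continuousAt_iff.1 (hFx.continuousAt (x := (x, x))) (ε/4) hε4
  obtain ⟨δ₂, hδ₂, h2⟩ := Metric.continuousAt_iff.1 (hFy.continuousAt (x := (x, x))) (ε/4) hε4
  refine ⟨min δ₁ δ₂, lt_min hδ₁ hδ₂, ?_⟩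
  intro t ht hdist
  have ht0 : (0:ℝ) ≤ t := ht.1
  have htx : t ≠ x := ht.2
  have hd : |t - x| < min δ₁ δ₂ := by rw [Real.dist_eq] at hdist; exact hdist
  set c : M := Fx x x + Fy x x with hc
  have hbound : ∀ s ∈ Set.uIoc x t,
      ‖(Fy (max t x) s + Fx s (min t x)) - c‖ ≤ ε / 2 := by
    intro s hs
    have hs' := Set.mem_uIcc.1 (Set.uIoc_subset_uIcc hs)
    have hsx : |s - x| ≤ |t - x| := by
      rcases hs' with ⟨ha, hb⟩ | ⟨ha, hb⟩
      · rw [abs_of_nonneg (by linarith : (0:ℝ) ≤ s - x),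
          abs_of_nonneg (by linarith : (0:ℝ) ≤ t - x)]; linarith
      · rw [abs_of_nonpos (by linarith : s - x ≤ 0),
          abs_of_nonpos (by linarith : t - x ≤ 0)]; linarith
    have hmax : |max t x - x| ≤ |t - x| := by
      rcases le_total x t with h | h
      · rw [max_eq_left h]
      · rw [max_eq_right h]; simpa using abs_nonneg (t - x)
    have hmin : |min t x - x| ≤ |t - x| := by
      rcases le_total x t with h | h
      · rw [min_eq_right h]; simpa using abs_nonneg (t - x)
      · rw [min_eq_left h]
    have hd1 : dist ((s, min t x) : ℝ × ℝ) ((x, x) : ℝ × ℝ) < δ₁ := by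
      rw [Prod.dist_eq]
      apply max_lt <;> rw [Real.dist_eq]
      · exact lt_of_le_of_lt hsx (lt_of_lt_of_le hd (min_le_left _ _))
      · exact lt_of_le_of_lt hmin (lt_of_lt_of_le hd (min_le_left _ _))
    have hd2 : dist ((max t x, s) : ℝ × ℝ) ((x, x) : ℝ × ℝ) < δ₂ := by
      rw [Prod.dist_eq]
      apply max_lt <;> rw [Real.dist_eq]
      · exact lt_of_le_of_lt hmax (lt_of_lt_of_le hd (min_le_right _ _))
      · exact lt_of_le_of_lt hsx (lt_of_lt_of_le hd (min_le_right _ _))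
    have e1 : dist (Fx s (min t x)) (Fx x x) < ε/4 := by simpa using h1 hd1
    have e2 : dist (Fy (max t x) s) (Fy x x) < ε/4 := by simpa using h2 hd2
    have hre : (Fy (max t x) s + Fx s (min t x)) - c =
        (Fy (max t x) s - Fy x x) + (Fx s (min t x) - Fx x x) := by
      rw [hc]; abel
    rw [hre]
    calc ‖(Fy (max t x) s - Fy x x) + (Fx s (min t x) - Fx x x)‖
        ≤ ‖Fy (max t x) s - Fy x x‖ + ‖Fx s (min t x) - Fx x x‖ := norm_add_le _ _
      _ ≤ ε/4 + ε/4 := by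
          rw [dist_eq_norm] at e1 e2
          exact add_le_add (le_of_lt e2) (le_of_lt e1)
      _ = ε/2 := by ring
  have hslope : slope (fun t => F t t) x t - c =
      (t - x)⁻¹ • ∫ s in x..t, ((Fy (max t x) s + Fx s (min t x)) - c) := by
    rw [intervalIntegral.integral_sub ((cS (max t x) (min t x)).intervalIntegrable _ _)
        intervalIntegrable_const,
      intervalIntegral.integral_const, slope_def_module, key t ht0, smul_sub, smul_smul,
      inv_mul_cancel₀ (sub_ne_zero.2 htx), one_smul]
  rw [dist_eq_norm, hslope, norm_smul]
  have hb := intervalIntegral.norm_integral_le_of_norm_le_const hbound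
  have habs : (0:ℝ) < |t - x| := abs_pos.2 (sub_ne_zero.2 htx)
  calc ‖(t - x)⁻¹‖ * ‖∫ s in x..t, ((Fy (max t x) s + Fx s (min t x)) - c)‖
      ≤ ‖(t - x)⁻¹‖ * (ε/2 * |t - x|) :=
        mul_le_mul_of_nonneg_left hb (norm_nonneg _)
    _ = ε/2 := by
        rw [Real.norm_eq_abs, abs_inv]
        field_simp
    _ < ε := by linarith

end GLaux


open GLaux

set_option maxHeartbeats 1000000 in
/-- Theorem 5.2(a) and (c) (with `λ = k²`): if the kernel `K` satisfies the matrix PDE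
`K_xx − K_yy = Ṽ(x)·K − K·V(y)` on `0 ≤ y ≤ x`, where `Ṽ(x) = V(x) + 2 (d/dx) K(x,x)`,
together with the boundary relation `−K_y(x,0)·A + K(x,0)·B = 0`, then
`φ̃(x) := φ(x) + ∫₀ˣ K(x,y)·φ(y) dy` is twice continuously differentiable, satisfies the
perturbed equation `φ̃'' = (Ṽ − λ)·φ̃` on `[0,∞)`, with `φ̃(0) = A` and
`φ̃'(0) = B + K(0,0)·A`. -/
theorem gelfand_levitan_transformed_regular_solution {n : ℕ} (lam : ℂ)
    (V φ φ' φ'' : ℝ → Matrix (Fin n) (Fin n) ℂ)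
    (K Kx Ky Kxx Kyy : ℝ → ℝ → Matrix (Fin n) (Fin n) ℂ)
    (dK : ℝ → Matrix (Fin n) (Fin n) ℂ)
    (A B : Matrix (Fin n) (Fin n) ℂ)
    -- the potential is continuous on `[0,∞)`
    (hV : ContinuousOn V (Set.Ici (0:ℝ)))
    -- `φ` is the regular solution: twice continuously differentiable,
    -- solving `φ'' = (V − λ)·φ` with `φ(0) = A`, `φ'(0) = B`
    (hφ1 : ∀ x ∈ Set.Ici (0:ℝ), HasDerivWithinAt φ (φ' x) (Set.Ici (0:ℝ)) x)
    (hφ2 : ∀ x ∈ Set.Ici (0:ℝ), HasDerivWithinAt φ' (φ'' x) (Set.Ici (0:ℝ)) x)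
    (hφ''c : ContinuousOn φ'' (Set.Ici (0:ℝ)))
    (hφeq : ∀ x ∈ Set.Ici (0:ℝ), φ'' x = (V x - lam • 1) * φ x)
    (hφ0 : φ 0 = A) (hφ'0 : φ' 0 = B)
    -- `K` is twice continuously differentiable on the region `{0 ≤ y ≤ x}`
    (hKx : ∀ x y : ℝ, 0 ≤ y → y ≤ x →
      HasDerivWithinAt (fun t => K t y) (Kx x y) (Set.Ici y) x)
    (hKy : ∀ x y : ℝ, 0 ≤ y → y ≤ x →
      HasDerivWithinAt (fun t => K x t) (Ky x y) (Set.Icc (0:ℝ) x) y)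
    (hKxx : ∀ x y : ℝ, 0 ≤ y → y ≤ x →
      HasDerivWithinAt (fun t => Kx t y) (Kxx x y) (Set.Ici y) x)
    (hKyy : ∀ x y : ℝ, 0 ≤ y → y ≤ x →
      HasDerivWithinAt (fun t => Ky x t) (Kyy x y) (Set.Icc (0:ℝ) x) y)
    (hKc : ContinuousOn (fun p : ℝ × ℝ => K p.1 p.2) {p : ℝ × ℝ | 0 ≤ p.2 ∧ p.2 ≤ p.1})
    (hKxc : ContinuousOn (fun p : ℝ × ℝ => Kx p.1 p.2) {p : ℝ × ℝ | 0 ≤ p.2 ∧ p.2 ≤ p.1})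
    (hKyc : ContinuousOn (fun p : ℝ × ℝ => Ky p.1 p.2) {p : ℝ × ℝ | 0 ≤ p.2 ∧ p.2 ≤ p.1})
    (hKxxc : ContinuousOn (fun p : ℝ × ℝ => Kxx p.1 p.2) {p : ℝ × ℝ | 0 ≤ p.2 ∧ p.2 ≤ p.1})
    (hKyyc : ContinuousOn (fun p : ℝ × ℝ => Kyy p.1 p.2) {p : ℝ × ℝ | 0 ≤ p.2 ∧ p.2 ≤ p.1})
    -- `dK` is the derivative of the diagonal `x ↦ K(x,x)`
    (hdK : ∀ x ∈ Set.Ici (0:ℝ), HasDerivWithinAt (fun t => K t t) (dK x) (Set.Ici (0:ℝ)) x)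
    -- the matrix PDE on the region, with `Ṽ(x) = V(x) + 2·dK(x)`
    (hPDE : ∀ x y : ℝ, 0 ≤ y → y ≤ x →
      Kxx x y - Kyy x y = (V x + (2:ℂ) • dK x) * K x y - K x y * V y)
    -- the boundary relation `−K_y(x,0)·A + K(x,0)·B = 0`
    (hbc : ∀ x ∈ Set.Ici (0:ℝ), -(Ky x 0) * A + K x 0 * B = 0) :
    ∃ ψ' ψ'' : ℝ → Matrix (Fin n) (Fin n) ℂ,
      (∀ x ∈ Set.Ici (0:ℝ),
        HasDerivWithinAt (fun t => φ t + ∫ y in (0:ℝ)..t, K t y * φ y)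
          (ψ' x) (Set.Ici (0:ℝ)) x) ∧
      (∀ x ∈ Set.Ici (0:ℝ), HasDerivWithinAt ψ' (ψ'' x) (Set.Ici (0:ℝ)) x) ∧
      ContinuousOn ψ'' (Set.Ici (0:ℝ)) ∧
      (∀ x ∈ Set.Ici (0:ℝ),
        ψ'' x = (V x + (2:ℂ) • dK x - lam • 1) *
          (φ x + ∫ y in (0:ℝ)..x, K x y * φ y)) ∧
      (φ 0 + ∫ y in (0:ℝ)..(0:ℝ), K 0 y * φ y) = A ∧
      ψ' 0 = B + K 0 0 * A := by
  letI := @GLaux.topM n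
  -- continuity of extended functions
  have cK := continuous_ext hKc
  have cKx := continuous_ext hKxc
  have cKy := continuous_ext hKyc
  have cKxx := continuous_ext hKxxc
  have cKyy := continuous_ext hKyyc
  have cφ : ContinuousOn φ (Ici 0) := fun x hx => (hφ1 x hx).continuousWithinAt
  have cφ' : ContinuousOn φ' (Ici 0) := fun x hx => (hφ2 x hx).continuousWithinAt
  have cφe : Continuous (ext1 φ) := continuous_ext1 cφ
  have cφ'e : Continuous (ext1 φ') := continuous_ext1 cφ'
  have cφ''e : Continuous (ext1 φ'') := continuous_ext1 hφ''c
  have cVe : Continuous (ext1 V) := continuous_ext1 hV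
  -- FTC identities for the extended kernels
  have hFTCgen : ∀ (G Gx : ℝ → ℝ → Matrix (Fin n) (Fin n) ℂ),
      Continuous (fun p : ℝ × ℝ => ext G p.1 p.2) →
      Continuous (fun p : ℝ × ℝ => ext Gx p.1 p.2) →
      (∀ x y : ℝ, 0 ≤ y → y ≤ x → HasDerivWithinAt (fun t => G t y) (Gx x y) (Set.Ici y) x) →
      ∀ x y : ℝ, 0 ≤ y → y ≤ x →
      ext G x y - ext G y y = ∫ s in y..x, ext Gx s y := by
    intro G Gx cG cGx hGx x y h0 hyx
    have c1 : Continuous fun s => ext G s y := cG.comp (continuous_id.prodMk continuous_const)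
    have c2 : Continuous fun s => ext Gx s y := cGx.comp (continuous_id.prodMk continuous_const)
    have ftc := intervalIntegral.integral_eq_sub_of_hasDeriv_right_of_le
      (f := fun s => ext G s y) (f' := fun s => ext Gx s y) hyx c1.continuousOn
      (fun s hs => ?_) (c2.intervalIntegrable _ _)
    · rw [ftc]
    · have hys : y ≤ s := le_of_lt hs.1
      have base : HasDerivWithinAt (fun t => G t y) (Gx s y) (Ioi s) s :=
        (hGx s y h0 hys).mono (fun t ht => le_trans hys (le_of_lt ht))
      beta_reduce
      rw [ext_eq Gx h0 hys]
      exact base.congr (fun t ht => ext_eq G h0 (le_trans hys (le_of_lt ht)))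
        (ext_eq G h0 hys)
  have hFTCx := hFTCgen K Kx cK cKx hKx
  have hFTCxx := hFTCgen Kx Kxx cKx cKxx hKxx
  have hFTCy : ∀ x y : ℝ, 0 ≤ y → y ≤ x →
      ext K x x - ext K x y = ∫ s in y..x, ext Ky x s := by
    intro x y h0 hyx
    have c1 : Continuous fun s => ext K x s := cK.comp (continuous_const.prodMk continuous_id)
    have c2 : Continuous fun s => ext Ky x s := cKy.comp (continuous_const.prodMk continuous_id)
    have ftc := intervalIntegral.integral_eq_sub_of_hasDeriv_right_of_le
      (f := fun s => ext K x s) (f' := fun s => ext Ky x s) hyx c1.continuousOn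
      (fun s hs => ?_) (c2.intervalIntegrable _ _)
    · rw [ftc]
    · have h0s : (0:ℝ) ≤ s := le_trans h0 (le_of_lt hs.1)
      have hsx : s ≤ x := le_of_lt hs.2
      have base2 : HasDerivWithinAt (fun t => ext K x t) (Ky x s) (Icc 0 x) s :=
        (hKy x s h0s hsx).congr (fun t ht => ext_eq K ht.1 ht.2) (ext_eq K h0s hsx)
      beta_reduce
      rw [ext_eq Ky h0s hsx]
      exact base2.mono_of_mem_nhdsWithin (mem_nhdsWithin.2
        ⟨Iio x, isOpen_Iio, hs.2, fun t ht => ⟨le_trans h0s (le_of_lt ht.2), le_of_lt ht.1⟩⟩)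
  -- the diagonal derivative
  have hdiagext : ∀ x ∈ Ici (0:ℝ), HasDerivWithinAt (fun t => ext K t t)
      (ext Kx x x + ext Ky x x) (Ici 0) x :=
    fun x hx => diag_deriv cKx cKy hFTCx hFTCy hx
  have dK_eq : ∀ x ∈ Ici (0:ℝ), dK x = Kx x x + Ky x x := by
    intro x hx
    have h2 : HasDerivWithinAt (fun t => K t t) (ext Kx x x + ext Ky x x) (Ici 0) x :=
      (hdiagext x hx).congr (fun t ht => (ext_eq K ht le_rfl).symm) (ext_eq K hx le_rfl).symm
    have u1 := (hdK x hx).derivWithin (uniqueDiffOn_Ici 0 x hx)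
    have u2 := h2.derivWithin (uniqueDiffOn_Ici 0 x hx)
    rw [← u1, u2, ext_eq Kx hx le_rfl, ext_eq Ky hx le_rfl]
  -- integrals with original vs extended integrands agree
  have e1 : ∀ t ∈ Ici (0:ℝ),
      (∫ y in (0:ℝ)..t, K t y * φ y) = ∫ y in (0:ℝ)..t, ext K t y * ext1 φ y := by
    intro t ht
    apply intervalIntegral.integral_congr
    intro y hy
    rw [uIcc_of_le ht] at hy
    beta_reduce
    rw [ext_eq K hy.1 hy.2, ext1_eq φ hy.1]
  refine ⟨fun x => φ' x + (ext K x x * ext1 φ x + ∫ y in (0:ℝ)..x, ext Kx x y * ext1 φ y),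
    fun x => (V x + (2:ℂ) • dK x - lam • 1) * (φ x + ∫ y in (0:ℝ)..x, K x y * φ y),
    ?_, ?_, ?_, ?_, ?_, ?_⟩
  · -- first derivative
    intro x hx
    refine ((hφ1 x hx).add (key_deriv cK cKx hFTCx cφe hx)).congr
      (fun t ht => by rw [e1 t ht]; rfl) (by rw [e1 x hx]; rfl)
  · -- second derivative
    intro x hx
    have hφe : HasDerivWithinAt (ext1 φ) (φ' x) (Ici 0) x :=
      (hφ1 x hx).congr (fun t ht => ext1_eq φ ht) (ext1_eq φ hx)
    have h1 : HasDerivWithinAt (fun t => ext K t t * ext1 φ t)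
        ((ext Kx x x + ext Ky x x) * ext1 φ x + ext K x x * φ' x) (Ici 0) x :=
      hasDerivWithinAt_mul (hdiagext x hx) hφe
    have h2 := key_deriv cKx cKxx hFTCxx cφe hx
    have hsum := (hφ2 x hx).add (h1.add h2)
    have hval : φ'' x + (((ext Kx x x + ext Ky x x) * ext1 φ x + ext K x x * φ' x) +
        (ext Kx x x * ext1 φ x + ∫ y in (0:ℝ)..x, ext Kxx x y * ext1 φ y)) =
        (V x + (2:ℂ) • dK x - lam • 1) * (φ x + ∫ y in (0:ℝ)..x, K x y * φ y) := by
      rw [ext_eq Kx hx le_rfl, ext_eq Ky hx le_rfl, ext_eq K hx le_rfl, ext1_eq φ hx]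
      have eKxx : (∫ y in (0:ℝ)..x, ext Kxx x y * ext1 φ y) =
          ∫ y in (0:ℝ)..x, Kxx x y * φ y :=
        intervalIntegral.integral_congr (fun y hy => by
          rw [uIcc_of_le hx] at hy
          beta_reduce
          rw [ext_eq Kxx hy.1 hy.2, ext1_eq φ hy.1])
      rw [eKxx]
      -- continuity on [0, x] of all original integrands, by comparison with extensions
      have conKφ : ContinuousOn (fun y => K x y * φ y) (uIcc 0 x) := by
        apply ContinuousOn.congr
          (f := fun y => ext K x y * ext1 φ y)
          (((cK.comp (continuous_const.prodMk continuous_id)).matrix_mul cφe).continuousOn)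
        intro y hy
        rw [uIcc_of_le hx] at hy
        beta_reduce
        rw [ext_eq K hy.1 hy.2, ext1_eq φ hy.1]
      have conKyyφ : ContinuousOn (fun y => Kyy x y * φ y) (uIcc 0 x) := by
        apply ContinuousOn.congr
          (f := fun y => ext Kyy x y * ext1 φ y)
          (((cKyy.comp (continuous_const.prodMk continuous_id)).matrix_mul cφe).continuousOn)
        intro y hy
        rw [uIcc_of_le hx] at hy
        beta_reduce
        rw [ext_eq Kyy hy.1 hy.2, ext1_eq φ hy.1]
      have conKφ'' : ContinuousOn (fun y => K x y * φ'' y) (uIcc 0 x) := by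
        apply ContinuousOn.congr
          (f := fun y => ext K x y * ext1 φ'' y)
          (((cK.comp (continuous_const.prodMk continuous_id)).matrix_mul cφ''e).continuousOn)
        intro y hy
        rw [uIcc_of_le hx] at hy
        beta_reduce
        rw [ext_eq K hy.1 hy.2, ext1_eq φ'' hy.1]
      have conKVφ : ContinuousOn (fun y => K x y * (V y * φ y)) (uIcc 0 x) := by
        apply ContinuousOn.congr
          (f := fun y => ext K x y * (ext1 V y * ext1 φ y))
          (((cK.comp (continuous_const.prodMk continuous_id)).matrix_mul
            (cVe.matrix_mul cφe)).continuousOn)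
        intro y hy
        rw [uIcc_of_le hx] at hy
        beta_reduce
        rw [ext_eq K hy.1 hy.2, ext1_eq φ hy.1, ext1_eq V hy.1]
      -- integration by parts
      have ibp : ∫ y in (0:ℝ)..x, (Kyy x y * φ y - K x y * φ'' y) =
          (Ky x x * φ x - K x x * φ' x) - (Ky x 0 * A - K x 0 * B) := by
        have hcont : ContinuousOn (fun y => Ky x y * φ y - K x y * φ' y) (Icc 0 x) := by
          apply ContinuousOn.congr
            (f := fun y => ext Ky x y * ext1 φ y - ext K x y * ext1 φ' y)
            ((((cKy.comp (continuous_const.prodMk continuous_id)).matrix_mul cφe).sub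
              ((cK.comp (continuous_const.prodMk continuous_id)).matrix_mul cφ'e)).continuousOn)
          intro y hy
          beta_reduce
          rw [ext_eq Ky hy.1 hy.2, ext1_eq φ hy.1, ext_eq K hy.1 hy.2, ext1_eq φ' hy.1]
        have ftc := intervalIntegral.integral_eq_sub_of_hasDeriv_right_of_le
          (f := fun y => Ky x y * φ y - K x y * φ' y)
          (f' := fun y => Kyy x y * φ y - K x y * φ'' y) hx hcont
          (fun y hy => ?_) ((conKyyφ.sub conKφ'').intervalIntegrable)
        · rw [ftc]
          beta_reduce
          rw [hφ0, hφ'0]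
        · have h0y : (0:ℝ) ≤ y := le_of_lt hy.1
          have hyx : y ≤ x := le_of_lt hy.2
          have hφI : HasDerivWithinAt φ (φ' y) (Icc 0 x) y :=
            (hφ1 y h0y).mono (fun t ht => ht.1)
          have hφ'I : HasDerivWithinAt φ' (φ'' y) (Icc 0 x) y :=
            (hφ2 y h0y).mono (fun t ht => ht.1)
          have hd := (hasDerivWithinAt_mul (hKyy x y h0y hyx) hφI).sub
            (hasDerivWithinAt_mul (hKy x y h0y hyx) hφ'I)
          beta_reduce
          have hval2 : Kyy x y * φ y - K x y * φ'' y =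
              (Kyy x y * φ y + Ky x y * φ' y) - (Ky x y * φ' y + K x y * φ'' y) := by abel
          rw [hval2]
          exact hd.mono_of_mem_nhdsWithin (mem_nhdsWithin.2
            ⟨Iio x, isOpen_Iio, hy.2, fun t ht => ⟨le_trans h0y (le_of_lt ht.2), le_of_lt ht.1⟩⟩)
      have eKyy : (∫ y in (0:ℝ)..x, Kyy x y * φ y) =
          ((Ky x x * φ x - K x x * φ' x) - (Ky x 0 * A - K x 0 * B)) +
            ∫ y in (0:ℝ)..x, K x y * φ'' y := by
        rw [intervalIntegral.integral_sub conKyyφ.intervalIntegrable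
          conKφ''.intervalIntegrable] at ibp
        rw [← ibp]
        abel
      -- rewrite φ'' under the integral
      have eφ'' : (∫ y in (0:ℝ)..x, K x y * φ'' y) =
          (∫ y in (0:ℝ)..x, K x y * (V y * φ y)) -
            lam • ∫ y in (0:ℝ)..x, K x y * φ y := by
        have hpt : ∀ y ∈ uIcc (0:ℝ) x, K x y * φ'' y =
            K x y * (V y * φ y) - lam • (K x y * φ y) := by
          intro y hy
          rw [uIcc_of_le hx] at hy
          beta_reduce
          rw [hφeq y hy.1, sub_mul, smul_mul_assoc, one_mul, mul_sub, mul_smul_comm]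
        rw [intervalIntegral.integral_congr hpt,
          intervalIntegral.integral_sub conKVφ.intervalIntegrable
            ((conKφ.fun_const_smul lam).intervalIntegrable),
          intervalIntegral.integral_smul]
      -- use the PDE under the integral
      have ePDE : (∫ y in (0:ℝ)..x, Kxx x y * φ y) =
          (∫ y in (0:ℝ)..x, Kyy x y * φ y) +
            ((V x + (2:ℂ) • dK x) * (∫ y in (0:ℝ)..x, K x y * φ y) -
              ∫ y in (0:ℝ)..x, K x y * (V y * φ y)) := by
        have hpt : ∀ y ∈ uIcc (0:ℝ) x, Kxx x y * φ y =
            Kyy x y * φ y + ((V x + (2:ℂ) • dK x) * (K x y * φ y) -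
              K x y * (V y * φ y)) := by
          intro y hy
          rw [uIcc_of_le hx] at hy
          beta_reduce
          have := hPDE x y hy.1 hy.2
          have h' : Kxx x y = Kyy x y + ((V x + (2:ℂ) • dK x) * K x y - K x y * V y) := by
            rw [← this]; abel
          rw [h', add_mul, sub_mul, mul_assoc, mul_assoc]
        have conVtKφ : ContinuousOn (fun y => (V x + (2:ℂ) • dK x) * (K x y * φ y))
            (uIcc 0 x) := by
          apply ContinuousOn.congr
            (f := fun y => (V x + (2:ℂ) • dK x) * (ext K x y * ext1 φ y))
            ((continuous_const.matrix_mul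
              ((cK.comp (continuous_const.prodMk continuous_id)).matrix_mul cφe)).continuousOn)
          intro y hy
          rw [uIcc_of_le hx] at hy
          beta_reduce
          rw [ext_eq K hy.1 hy.2, ext1_eq φ hy.1]
        rw [intervalIntegral.integral_congr hpt,
          intervalIntegral.integral_add conKyyφ.intervalIntegrable
            (conVtKφ.fun_sub conKVφ).intervalIntegrable,
          intervalIntegral.integral_sub conVtKφ.intervalIntegrable
            conKVφ.intervalIntegrable,
          integral_const_mul' _ conKφ.intervalIntegrable]
      -- boundary condition
      have hbc' : Ky x 0 * A - K x 0 * B = 0 := by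
        have h := hbc x hx
        have : Ky x 0 * A - K x 0 * B = -(-(Ky x 0) * A + K x 0 * B) := by
          rw [neg_mul]; abel
        rw [this, h, neg_zero]
      -- final algebra
      rw [ePDE, eKyy, eφ'', hφeq x hx, dK_eq x hx, hbc']
      simp only [sub_mul, add_mul, mul_add, mul_sub, smul_mul_assoc, one_mul, smul_add,
        smul_sub, two_smul]
      abel
    beta_reduce
    rw [← hval]
    exact hsum
  · -- continuity of ψ''
    have cint : Continuous fun x => ∫ y in (0:ℝ)..x, ext K x y * ext1 φ y :=
      continuous_parametric_intervalIntegral_of_continuous (μ := volume)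
        (f := fun x y => ext K x y * ext1 φ y)
        (cK.matrix_mul (cφe.comp continuous_snd)) continuous_id
    have cbig : Continuous fun x =>
        (ext1 V x + (2:ℂ) • (ext Kx x x + ext Ky x x) - lam • (1 : Matrix (Fin n) (Fin n) ℂ)) *
          (ext1 φ x + ∫ y in (0:ℝ)..x, ext K x y * ext1 φ y) := by
      apply Continuous.matrix_mul
      · exact (cVe.fun_add (((cKx.comp (continuous_id.prodMk continuous_id)).fun_add
          (cKy.comp (continuous_id.prodMk continuous_id))).fun_const_smul _)).fun_sub continuous_const
      · exact cφe.add cint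
    apply cbig.continuousOn.congr
    intro x hx
    beta_reduce
    rw [dK_eq x hx, ext1_eq V hx, ext1_eq φ hx, ext_eq Kx hx le_rfl, ext_eq Ky hx le_rfl,
      e1 x hx]
  · -- the equation: definitional
    intro x hx
    rfl
  · simp [hφ0]
  · show φ' 0 + (ext K 0 0 * ext1 φ 0 + ∫ y in (0:ℝ)..(0:ℝ), ext Kx 0 y * ext1 φ y) =
      B + K 0 0 * A
    rw [intervalIntegral.integral_same, hφ'0, ext_eq K le_rfl le_rfl, ext1_eq φ le_rfl, hφ0]
    abel
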